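/- Let E be a real normed vector space and A : E →L[ℝ] E a continuous linear map. Then the limit μ(A) := lim_{θ → 0⁺} (‖id + θ • A‖ − 1)/θ exists (as a real number), where ‖·‖ is the operator norm; moreover |μ(A)| ≤ ‖A‖. -/

import Mathlib

open Filter Topology Set

theorem logNorm_limit_exists {E : Type*} [NormedAddCommGroup E]
    [NormedSpace ℝ E] [Nontrivial E] (A : E →L[ℝ] E) :
    ∃ c : ℝ, |c| ≤ ‖A‖ ∧
      Tendsto (fun θ : ℝ => (‖ContinuousLinearMap.id ℝ E + θ • A‖ - 1) / θ)
        (𝓝[>] 0) (𝓝 c) := by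
  set f : ℝ → ℝ := fun θ => (‖ContinuousLinearMap.id ℝ E + θ • A‖ - 1) / θ with hf
  have hid : ‖ContinuousLinearMap.id ℝ E‖ = 1 := ContinuousLinearMap.norm_id
  have hsm : ∀ (r : ℝ) (B : E →L[ℝ] E), ‖r • B‖ = |r| * ‖B‖ := fun r B => by
    rw [norm_smul r B, Real.norm_eq_abs]
  have hlow : ∀ θ : ℝ, 0 < θ → -‖A‖ ≤ f θ := by
    intro θ hθ
    rw [hf, le_div_iff₀ hθ]
    have h2 := norm_sub_norm_le (ContinuousLinearMap.id ℝ E) (-(θ • A))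
    simp only [sub_neg_eq_add, norm_neg, hid] at h2
    have hθA : ‖θ • A‖ = θ * ‖A‖ := by rw [hsm θ A, abs_of_pos hθ]
    nlinarith
  have hup : ∀ θ : ℝ, 0 < θ → f θ ≤ ‖A‖ := by
    intro θ hθ
    rw [hf, div_le_iff₀ hθ]
    have h2 := norm_add_le (ContinuousLinearMap.id ℝ E) (θ • A)
    have hθA : ‖θ • A‖ = θ * ‖A‖ := by rw [hsm θ A, abs_of_pos hθ]
    rw [hid, hθA] at h2
    linarith
  have hmono : MonotoneOn f (Ioi (0:ℝ)) := by
    intro s hs t ht hst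
    simp only [mem_Ioi] at hs ht
    rw [hf, div_le_div_iff₀ hs ht]
    have key : ContinuousLinearMap.id ℝ E + s • A
        = (1 - s/t) • ContinuousLinearMap.id ℝ E + (s/t) • (ContinuousLinearMap.id ℝ E + t • A) := by
      rw [smul_add, smul_smul, div_mul_cancel₀ s ht.ne', sub_smul, one_smul]
      abel
    have hst' : s / t ≤ 1 := (div_le_one ht).2 hst
    have hst0 : 0 ≤ s / t := div_nonneg hs.le ht.le
    have hn : ‖ContinuousLinearMap.id ℝ E + s • A‖
        ≤ (1 - s/t) + (s/t) * ‖ContinuousLinearMap.id ℝ E + t • A‖ := by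
      rw [key]
      refine (norm_add_le _ _).trans ?_
      rw [hsm (1 - s/t) _, hsm (s/t) _, hid, abs_of_nonneg (by linarith : (0:ℝ) ≤ 1 - s/t),
        abs_of_nonneg hst0, mul_one]
    have h3 := mul_le_mul_of_nonneg_left hn ht.le
    have hts : t * ((1 - s/t) + (s/t) * ‖ContinuousLinearMap.id ℝ E + t • A‖)
        = t - s + s * ‖ContinuousLinearMap.id ℝ E + t • A‖ := by
      field_simp
    nlinarith
  have hbdd : BddBelow (f '' Ioi (0:ℝ)) := by
    refine ⟨-‖A‖, ?_⟩
    rintro y ⟨θ, hθ, rfl⟩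
    exact hlow θ hθ
  refine ⟨sInf (f '' Ioi (0:ℝ)), ?_, hmono.tendsto_nhdsGT hbdd⟩
  rw [abs_le]
  have hmem : f 1 ∈ f '' Ioi (0:ℝ) := ⟨1, mem_Ioi.2 one_pos, rfl⟩
  constructor
  · apply le_csInf ⟨f 1, hmem⟩
    rintro y ⟨θ, hθ, rfl⟩
    exact hlow θ hθ
  · exact (csInf_le hbdd hmem).trans (hup 1 one_pos)
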